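/- Let 𝔤 be a Lie algebra over a field of characteristic zero, let x ∈ 𝔤 be ad-nilpotent on a given element in the following sense: for r in the universal enveloping algebra U𝔤, suppose [x,·]^n(r) = 0 for some n ∈ ℕ (where [x,·] denotes the commutator derivation ad(x) extended to U𝔤). Then r·x^n = x·∑_{i=0}^{n-1} C(n,i)·x^{n-i-1}·[·,x]^i(r), where [·,x] = −ad(x). In particular, the multiplicative set generated by a set of locally ad-nilpotent elements of 𝔤 satisfies the right Ore condition in U𝔤. -/

import Mathlib

open UniversalEnvelopingAlgebra

open Finset


section Aux

variable {k : Type*} [CommRing k] {A : Type*} [Ring A] [Algebra k A]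

/-- The inner derivation `a ↦ c*a - a*c` as a linear endomorphism. -/
def Dl (k : Type*) [CommRing k] {A : Type*} [Ring A] [Algebra k A] (c : A) : Module.End k A :=
  LinearMap.mulLeft k c - LinearMap.mulRight k c

lemma Dl_apply (c a : A) : Dl k c a = c * a - a * c := rfl

lemma Dl_mul (c u v : A) : Dl k c (u * v) = Dl k c u * v + u * Dl k c v := by
  simp only [Dl_apply]; noncomm_ring

lemma Dl_pow_mono (c : A) {n N : ℕ} (h : n ≤ N) {u : A} (hu : (Dl k c ^ n) u = 0) :
    (Dl k c ^ N) u = 0 := by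
  obtain ⟨j, rfl⟩ := Nat.exists_eq_add_of_le h
  rw [add_comm, pow_add, Module.End.mul_apply, hu, map_zero]

lemma Dl_pow_mul (c : A) : ∀ N n m (u v : A), n + m = N →
    (Dl k c ^ n) u = 0 → (Dl k c ^ m) v = 0 → (Dl k c ^ N) (u * v) = 0 := by
  intro N
  induction N using Nat.strong_induction_on with
  | _ N ih =>
    rintro n m u v rfl hu hv
    match n, m, hu, hv with
    | 0, m, hu, hv =>
      rw [pow_zero, Module.End.one_apply] at hu
      rw [hu, zero_mul, map_zero]
    | n+1, 0, hu, hv =>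
      rw [pow_zero, Module.End.one_apply] at hv
      rw [hv, mul_zero, map_zero]
    | n+1, m+1, hu, hv =>
      have hNe : n + 1 + (m + 1) = (n + m + 1) + 1 := by omega
      rw [hNe, pow_succ, Module.End.mul_apply, Dl_mul, map_add]
      have h1 : (Dl k c ^ (n + m + 1)) (Dl k c u * v) = 0 := by
        refine ih (n + m + 1) (by omega) n (m + 1) _ _ (by omega) ?_ hv
        rw [← Module.End.mul_apply, ← pow_succ]; exact hu
      have h2 : (Dl k c ^ (n + m + 1)) (u * Dl k c v) = 0 := by
        refine ih (n + m + 1) (by omega) (n + 1) m _ _ (by omega) hu ?_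
        rw [← Module.End.mul_apply, ← pow_succ]; exact hv
      rw [h1, h2, add_zero]

lemma Dl_formula (c r : A) (n : ℕ) (h : (Dl k c ^ n) r = 0) :
    r * c ^ n = c * ∑ i ∈ Finset.range n, n.choose i •
      (c ^ (n - i - 1) *
        (((LinearMap.mulRight k c - LinearMap.mulLeft k c) : Module.End k A) ^ i) r) := by
  have hc : Commute (LinearMap.mulLeft k c) (LinearMap.mulRight k c) :=
    LinearMap.commute_mulLeft_right c c
  have hcomm : Commute (LinearMap.mulRight k c - LinearMap.mulLeft k c)
      (LinearMap.mulLeft k c) := hc.symm.sub_left (Commute.refl _)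
  set D : Module.End k A := LinearMap.mulRight k c - LinearMap.mulLeft k c with hD
  have hDn : (D ^ n) r = 0 := by
    have hneg : D ^ n = (-1) ^ n * (Dl k c) ^ n := by
      rw [show D = -(Dl k c) from (neg_sub _ _).symm]; exact neg_pow (Dl k c) n
    rw [hneg, Module.End.mul_apply, h, map_zero]
  have hsum : LinearMap.mulRight k c ^ n =
      ∑ i ∈ Finset.range (n + 1), D ^ i * LinearMap.mulLeft k c ^ (n - i) *
        (n.choose i : Module.End k A) := by
    rw [show LinearMap.mulRight k c = D + LinearMap.mulLeft k c from (sub_add_cancel _ _).symm,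
      hcomm.add_pow]
  have h1 : r * c ^ n = (LinearMap.mulRight k c ^ n) r := by
    rw [LinearMap.pow_mulRight, LinearMap.mulRight_apply]
  rw [h1, hsum, LinearMap.sum_apply]
  have hterm : ∀ i, (D ^ i * LinearMap.mulLeft k c ^ (n - i) *
      (n.choose i : Module.End k A)) r = n.choose i • (c ^ (n - i) * (D ^ i) r) := by
    intro i
    rw [(hcomm.pow_pow i (n - i)).eq]
    simp only [Module.End.mul_apply, Module.End.natCast_apply, map_nsmul,
      LinearMap.pow_mulLeft, LinearMap.mulLeft_apply]
  simp only [hterm]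
  rw [Finset.sum_range_succ, hDn, mul_zero, smul_zero, add_zero, Finset.mul_sum]
  refine Finset.sum_congr rfl fun i hi => ?_
  have hi' : i < n := Finset.mem_range.mp hi
  obtain ⟨s, hs⟩ : ∃ s, n - i = s + 1 := ⟨n - i - 1, by omega⟩
  rw [hs, Nat.add_sub_cancel, pow_succ', mul_assoc, mul_smul_comm]

end Aux

section LocNil

variable {k : Type*} [CommRing k] {L : Type*} [LieRing L] [LieAlgebra k L]

lemma locnil (t : L) (ht : ∀ y : L, ∃ m : ℕ, ((LieAlgebra.ad k L t) ^ m) y = 0)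
    (u : UniversalEnvelopingAlgebra k L) :
    ∃ n : ℕ, (Dl k (ι k t) ^ n) u = 0 := by
  have hsurj : Function.Surjective (UniversalEnvelopingAlgebra.mkAlgHom k L) :=
    by intro u; obtain ⟨p, rfl⟩ := Quot.exists_rep (u : (UniversalEnvelopingAlgebra.ringCon k L).Quotient); exact ⟨p, rfl⟩
  obtain ⟨p, rfl⟩ := hsurj u
  induction p using TensorAlgebra.induction with
  | algebraMap r =>
    refine ⟨1, ?_⟩
    rw [pow_one, AlgHom.commutes, Dl_apply, sub_eq_zero]
    exact (Algebra.commutes r ((ι k) t)).symm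
  | ι y =>
    obtain ⟨m, hm⟩ := ht y
    refine ⟨m, ?_⟩
    have key : ∀ j (z : L), (Dl k (ι k t) ^ j) (ι k z) =
        ι k (((LieAlgebra.ad k L t) ^ j) z) := by
      intro j
      induction j with
      | zero => intro z; simp
      | succ j ihj =>
        intro z
        have hstep : Dl k (ι k t) (ι k z) = ι k ⁅t, z⁆ := by
          rw [Dl_apply, ← Ring.lie_def]
          letI : LieRing (UniversalEnvelopingAlgebra k L) := LieRing.ofAssociativeRing
          letI : LieAlgebra k (UniversalEnvelopingAlgebra k L) := LieAlgebra.ofAssociativeAlgebra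
          exact (LieHom.map_lie (ι k) t z).symm
        rw [pow_succ, Module.End.mul_apply, hstep, ihj ⁅t, z⁆, pow_succ, Module.End.mul_apply,
          LieAlgebra.ad_apply]
    rw [show (UniversalEnvelopingAlgebra.mkAlgHom k L) (TensorAlgebra.ι k y) = ι k y from
      (ι_apply k y).symm, key m y, hm, map_zero]
  | mul a b ha hb =>
    obtain ⟨n1, h1⟩ := ha
    obtain ⟨n2, h2⟩ := hb
    exact ⟨n1 + n2, by rw [map_mul]; exact Dl_pow_mul _ _ n1 n2 _ _ rfl h1 h2⟩
  | add a b ha hb =>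
    obtain ⟨n1, h1⟩ := ha
    obtain ⟨n2, h2⟩ := hb
    refine ⟨max n1 n2, ?_⟩
    rw [map_add, map_add, Dl_pow_mono _ (le_max_left n1 n2) h1,
      Dl_pow_mono _ (le_max_right n1 n2) h2, add_zero]

end LocNil

/-- in the universal enveloping algebra `U 𝔤`, if `ad(x)^n r = 0` then
`r·x^n = x·∑_{i=0}^{n-1} C(n,i)·x^{n-i-1}·[·,x]^i(r)`; in particular the multiplicative
set generated by (images of) locally ad-nilpotent elements of `𝔤` satisfies the right
Ore condition in `U 𝔤`. -/
theorem stmt3 (k : Type*) [Field k] [CharZero k]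
    (L : Type*) [LieRing L] [LieAlgebra k L]
    (x : L) (r : UniversalEnvelopingAlgebra k L) (n : ℕ)
    (hn : (fun a : UniversalEnvelopingAlgebra k L =>
        ι k x * a - a * ι k x)^[n] r = 0) :
    r * (ι k x : UniversalEnvelopingAlgebra k L) ^ n =
      (ι k x : UniversalEnvelopingAlgebra k L) *
        ∑ i ∈ Finset.range n, (n.choose i : k) •
          ((ι k x : UniversalEnvelopingAlgebra k L) ^ (n - i - 1) *
            (fun a : UniversalEnvelopingAlgebra k L =>
              a * ι k x - ι k x * a)^[i] r) ∧
    ∀ (T : Set L),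
      (∀ t ∈ T, ∀ y : L, ∃ m : ℕ, ((LieAlgebra.ad k L t) ^ m) y = 0) →
      ∀ (u : UniversalEnvelopingAlgebra k L)
        (s : UniversalEnvelopingAlgebra k L),
        s ∈ Submonoid.closure ((fun t => (ι k t : UniversalEnvelopingAlgebra k L)) '' T) →
        ∃ (u' s' : UniversalEnvelopingAlgebra k L),
          s' ∈ Submonoid.closure ((fun t => (ι k t : UniversalEnvelopingAlgebra k L)) '' T) ∧
          u * s' = s * u' := by
  have hfun1 : (fun a : UniversalEnvelopingAlgebra k L => ι k x * a - a * ι k x) =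
      ⇑(Dl k (ι k x)) := by
    funext a; rw [Dl_apply]
  have hfun2 : ∀ (c : UniversalEnvelopingAlgebra k L),
      (fun a : UniversalEnvelopingAlgebra k L => a * c - c * a) =
      ⇑((LinearMap.mulRight k c - LinearMap.mulLeft k c : Module.End k _)) := by
    intro c; funext a
    simp [LinearMap.sub_apply, LinearMap.mulRight_apply, LinearMap.mulLeft_apply]
  constructor
  · rw [hfun1] at hn
    rw [← Module.End.pow_apply] at hn
    rw [hfun2 (ι k x)]
    simp only [← Module.End.pow_apply, Nat.cast_smul_eq_nsmul]
    exact Dl_formula (ι k x) r n hn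
  · intro T hT
    suffices h : ∀ s ∈ Submonoid.closure
        ((fun t => (ι k t : UniversalEnvelopingAlgebra k L)) '' T),
        ∀ u : UniversalEnvelopingAlgebra k L,
        ∃ u' s' : UniversalEnvelopingAlgebra k L,
          s' ∈ Submonoid.closure ((fun t => (ι k t : UniversalEnvelopingAlgebra k L)) '' T) ∧
          u * s' = s * u' by
      intro u s hs; exact h s hs u
    intro s hs
    induction hs using Submonoid.closure_induction with
    | mem s hsmem =>
      obtain ⟨t, htT, rfl⟩ := hsmem
      intro u
      obtain ⟨m, hnil⟩ := locnil t (hT t htT) u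
      refine ⟨∑ i ∈ Finset.range m, m.choose i •
          ((ι k t : UniversalEnvelopingAlgebra k L) ^ (m - i - 1) *
            (((LinearMap.mulRight k (ι k t) - LinearMap.mulLeft k (ι k t) :
              Module.End k (UniversalEnvelopingAlgebra k L))) ^ i) u),
        (ι k t : UniversalEnvelopingAlgebra k L) ^ m,
        pow_mem (Submonoid.subset_closure (Set.mem_image_of_mem _ htT)) m, ?_⟩
      exact Dl_formula (ι k t) u m hnil
    | one =>
      intro u; exact ⟨u, 1, one_mem _, by rw [mul_one, one_mul]⟩
    | mul a b ha hb iha ihb =>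
      intro u
      obtain ⟨u1, s1, hs1, h1⟩ := iha u
      obtain ⟨u2, s2, hs2, h2⟩ := ihb u1
      exact ⟨u2, s1 * s2, mul_mem hs1 hs2,
        by rw [← mul_assoc, h1, mul_assoc, h2, ← mul_assoc]⟩
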